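/- Fix natural numbers s and k with 2 ≤ k ≤ s. The number of families S of subsets of a labeled s-element set such that: S has exactly 2 members, the union of the members of S is the whole set, no proper subfamily of S covers the whole set (i.e., S is a minimal cover), and exactly k elements belong to exactly one member of S, equals C(s,k)·(2^{k−1} − 1). -/

import Mathlib

open Finset

def mcc_mf {n : ℕ} (d : Fin n) (U : Finset (Fin n)) : Fin n := WithTop.untopD d U.min

lemma mcc_mf_eq {n : ℕ} (d : Fin n) (U : Finset (Fin n)) (h : U.Nonempty) :
    mcc_mf d U = U.min' h := by
  simp [mcc_mf, ← Finset.coe_min' h, WithTop.untopD_coe]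

lemma mcc_mf_mem {n : ℕ} (d : Fin n) (U : Finset (Fin n)) (h : U.Nonempty) :
    mcc_mf d U ∈ U := by
  rw [mcc_mf_eq d U h]; exact U.min'_mem h

lemma mcc_inner_count {n : ℕ} (d : Fin n) (U : Finset (Fin n)) (h : U.Nonempty) :
    (U.powerset.filter (fun V => mcc_mf d U ∈ V ∧ V ≠ U)).card = 2 ^ (U.card - 1) - 1 := by
  set m := mcc_mf d U with hm
  have hmU : m ∈ U := mcc_mf_mem d U h
  have : (U.powerset.filter (fun V => m ∈ V ∧ V ≠ U)).card
      = (((U.erase m).powerset).erase (U.erase m)).card := by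
    apply Finset.card_nbij' (fun V => V.erase m) (fun W => insert m W)
    · intro V hV
      simp only [mem_coe, mem_filter, mem_powerset] at hV
      obtain ⟨hVU, hmV, hVne⟩ := hV
      rw [mem_coe, mem_erase]
      refine ⟨?_, by rw [mem_powerset]; exact Finset.erase_subset_erase m hVU⟩
      intro hEq
      apply hVne
      have := congrArg (insert m) hEq
      rwa [Finset.insert_erase hmV, Finset.insert_erase hmU] at this
    · intro W hW
      rw [mem_coe, mem_erase, mem_powerset] at hW
      obtain ⟨hWne, hWU⟩ := hW
      have hmW : m ∉ W := fun hx => (Finset.mem_erase.mp (hWU hx)).1 rfl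
      simp only [mem_coe, mem_filter, mem_powerset]
      refine ⟨Finset.insert_subset hmU (hWU.trans (Finset.erase_subset m U)),
        Finset.mem_insert_self _ _, ?_⟩
      intro hEq
      apply hWne
      rw [← hEq, Finset.erase_insert hmW]
    · intro V hV
      simp only [mem_coe, mem_filter] at hV
      exact Finset.insert_erase hV.2.1
    · intro W hW
      rw [mem_coe, mem_erase, mem_powerset] at hW
      have hmW : m ∉ W := fun hx => (Finset.mem_erase.mp (hW.2 hx)).1 rfl
      exact Finset.erase_insert hmW
  rw [this, Finset.card_erase_of_mem (by simp), Finset.card_powerset,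
    Finset.card_erase_of_mem hmU]

def mccUS {n : ℕ} (S : Finset (Finset (Fin n))) : Finset (Fin n) :=
  Finset.univ.filter (fun x : Fin n => (S.filter (fun A => x ∈ A)).card = 1)

def mccVS {n : ℕ} (d : Fin n) (S : Finset (Finset (Fin n))) : Finset (Fin n) :=
  (mccUS S).filter (fun x => ∀ C ∈ S, mcc_mf d (mccUS S) ∈ C → x ∈ C)

lemma mcc_count {n : ℕ} (A B : Finset (Fin n)) (hAB : A ≠ B) (x : Fin n) :
    ((({A, B} : Finset (Finset (Fin n))).filter (fun C => x ∈ C)).card = 1) ↔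
      ((x ∈ A ∧ x ∉ B) ∨ (x ∈ B ∧ x ∉ A)) := by
  rw [Finset.filter_insert, Finset.filter_singleton]
  by_cases hA : x ∈ A <;> by_cases hB : x ∈ B <;>
    simp [hA, hB, Finset.card_insert_of_notMem, hAB]

lemma mcc_mem_US {n : ℕ} (A B : Finset (Fin n)) (hAB : A ≠ B) (x : Fin n) :
    x ∈ mccUS {A, B} ↔ ((x ∈ A ∧ x ∉ B) ∨ (x ∈ B ∧ x ∉ A)) := by
  rw [mccUS, Finset.mem_filter]
  simp [mcc_count A B hAB x]

lemma mcc_US_f {n : ℕ} (U V : Finset (Fin n)) (hVU : V ⊆ U) (hV : V.Nonempty) :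
    mccUS {V ∪ Uᶜ, (U \ V) ∪ Uᶜ} = U := by
  obtain ⟨m, hm⟩ := hV
  have hAB : V ∪ Uᶜ ≠ (U \ V) ∪ Uᶜ := by
    intro h
    have hmA : m ∈ V ∪ Uᶜ := Finset.mem_union_left _ hm
    rw [h] at hmA
    rcases Finset.mem_union.mp hmA with h1 | h1
    · exact (Finset.mem_sdiff.mp h1).2 hm
    · exact (Finset.mem_compl.mp h1) (hVU hm)
  ext x
  rw [mcc_mem_US _ _ hAB]
  by_cases hxU : x ∈ U
  · simp only [hxU, iff_true]
    by_cases hxV : x ∈ V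
    · exact Or.inl ⟨Finset.mem_union_left _ hxV,
        by simp [Finset.mem_union, Finset.mem_sdiff, Finset.mem_compl, hxV, hxU]⟩
    · exact Or.inr ⟨Finset.mem_union_left _ (Finset.mem_sdiff.mpr ⟨hxU, hxV⟩),
        by simp [Finset.mem_union, Finset.mem_compl, hxV, hxU]⟩
  · simp only [hxU, iff_false]
    have hxc : x ∈ Uᶜ := Finset.mem_compl.mpr hxU
    push_neg
    exact ⟨fun _ => Finset.mem_union_right _ hxc, fun _ => Finset.mem_union_right _ hxc⟩

lemma mcc_left {n : ℕ} (d : Fin n) (A B : Finset (Fin n)) (hAB : A ≠ B)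
    (hcov : ∀ x : Fin n, x ∈ A ∨ x ∈ B)
    (hmA : mcc_mf d (mccUS {A, B}) ∈ A) (hmB : mcc_mf d (mccUS {A, B}) ∉ B) :
    mccVS d {A, B} ∪ (mccUS {A, B})ᶜ = A ∧
      (mccUS {A, B} \ mccVS d {A, B}) ∪ (mccUS {A, B})ᶜ = B := by
  set U := mccUS (({A, B} : Finset (Finset (Fin n)))) with hU
  set m := mcc_mf d U with hm
  have hVS : mccVS d {A, B} = U.filter (fun x => x ∈ A) := by
    rw [mccVS]
    apply Finset.filter_congr
    intro x _
    simp only [Finset.mem_insert, Finset.mem_singleton]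
    constructor
    · intro h; exact h A (Or.inl rfl) hmA
    · intro hxA C hC hmC
      rcases hC with rfl | rfl
      · exact hxA
      · exact absurd hmC hmB
  have hcompl : ∀ x : Fin n, x ∉ U → x ∈ A ∧ x ∈ B := by
    intro x hx
    rw [hU, mcc_mem_US _ _ hAB] at hx
    push_neg at hx
    rcases hcov x with h | h
    · exact ⟨h, hx.1 h⟩
    · exact ⟨hx.2 h, h⟩
  constructor
  · ext x
    simp only [Finset.mem_union, hVS, Finset.mem_filter, Finset.mem_compl]
    constructor
    · rintro (⟨_, h⟩ | h)
      · exact h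
      · exact (hcompl x h).1
    · intro hxA
      by_cases hxU : x ∈ U
      · exact Or.inl ⟨hxU, hxA⟩
      · exact Or.inr hxU
  · ext x
    simp only [Finset.mem_union, hVS, Finset.mem_sdiff, Finset.mem_filter, Finset.mem_compl]
    constructor
    · rintro (⟨hxU, h⟩ | h)
      · have := hxU
        rw [hU, mcc_mem_US _ _ hAB] at this
        rcases this with ⟨h1, _⟩ | ⟨h1, _⟩
        · exact absurd ⟨hxU, h1⟩ h
        · exact h1
      · exact (hcompl x h).2
    · intro hxB
      by_cases hxU : x ∈ U
      · left
        refine ⟨hxU, ?_⟩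
        rintro ⟨_, hxA⟩
        have := hxU
        rw [hU, mcc_mem_US _ _ hAB] at this
        rcases this with ⟨_, h2⟩ | ⟨_, h2⟩
        · exact h2 hxB
        · exact h2 hxA
      · exact Or.inr hxU

theorem minimal_two_covers_count (s k : ℕ) (hk2 : 2 ≤ k) (hks : k ≤ s) :
    (Finset.univ.filter (fun S : Finset (Finset (Fin s)) =>
        S.card = 2 ∧
        (∀ x : Fin s, ∃ A ∈ S, x ∈ A) ∧
        (∀ T : Finset (Finset (Fin s)), T ⊂ S → ¬ (∀ x : Fin s, ∃ A ∈ T, x ∈ A)) ∧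
        (Finset.univ.filter
          (fun x : Fin s => (S.filter (fun A => x ∈ A)).card = 1)).card = k)).card
      = s.choose k * (2 ^ (k - 1) - 1) := by
  have hs : 0 < s := by omega
  set d : Fin s := ⟨0, hs⟩ with hd
  set T : Finset (Σ _ : Finset (Fin s), Finset (Fin s)) :=
    (Finset.univ.powersetCard k).sigma
      (fun U => U.powerset.filter (fun V => mcc_mf d U ∈ V ∧ V ≠ U)) with hT
  have hTcard : T.card = s.choose k * (2 ^ (k - 1) - 1) := by
    rw [hT, Finset.card_sigma]
    rw [Finset.sum_congr rfl (fun U hU => ?_), Finset.sum_const, smul_eq_mul,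
      Finset.card_powersetCard, Finset.card_univ, Fintype.card_fin]
    rw [Finset.mem_powersetCard] at hU
    have hUne : U.Nonempty := Finset.card_pos.mp (by omega)
    rw [mcc_inner_count d U hUne, hU.2]
  rw [← hTcard]
  apply Finset.card_nbij' (fun S => (⟨mccUS S, mccVS d S⟩ : Σ _ : Finset (Fin s), Finset (Fin s)))
    (fun p => {p.2 ∪ p.1ᶜ, (p.1 \ p.2) ∪ p.1ᶜ})
  · -- forward: g maps family into T
    intro S hS
    simp only [Finset.mem_coe, Finset.mem_filter, Finset.mem_univ, true_and] at hS
    obtain ⟨h1, h2, h3, h4⟩ := hS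
    have hUk : (mccUS S).card = k := by simpa [mccUS] using h4
    have hUne : (mccUS S).Nonempty := Finset.card_pos.mp (by omega)
    have hmU : mcc_mf d (mccUS S) ∈ mccUS S := mcc_mf_mem d _ hUne
    obtain ⟨A, B, hAB, rfl⟩ := Finset.card_eq_two.mp h1
    have hcov : ∀ x : Fin s, x ∈ A ∨ x ∈ B := by
      intro x
      obtain ⟨C, hC, hxC⟩ := h2 x
      simp only [Finset.mem_insert, Finset.mem_singleton] at hC
      rcases hC with rfl | rfl
      · exact Or.inl hxC
      · exact Or.inr hxC
    have hAuniv : ∃ y, y ∉ A := by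
      have hss : ({A} : Finset (Finset (Fin s))) ⊂ {A, B} := by
        rw [Finset.ssubset_iff_subset_ne]
        refine ⟨by simp, ?_⟩
        intro h
        have := congrArg Finset.card h
        rw [Finset.card_singleton, Finset.card_pair hAB] at this
        omega
      have := h3 _ hss
      push_neg at this
      obtain ⟨y, hy⟩ := this
      exact ⟨y, hy A (Finset.mem_singleton_self A)⟩
    have hBuniv : ∃ y, y ∉ B := by
      have hss : ({B} : Finset (Finset (Fin s))) ⊂ {A, B} := by
        rw [Finset.ssubset_iff_subset_ne]
        refine ⟨by simp, ?_⟩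
        intro h
        have := congrArg Finset.card h
        rw [Finset.card_singleton, Finset.card_pair hAB] at this
        omega
      have := h3 _ hss
      push_neg at this
      obtain ⟨y, hy⟩ := this
      exact ⟨y, hy B (Finset.mem_singleton_self B)⟩
    rw [hT, Finset.mem_coe, Finset.mem_sigma]
    constructor
    · exact Finset.mem_powersetCard.mpr ⟨Finset.subset_univ _, hUk⟩
    · rw [Finset.mem_filter, Finset.mem_powerset]
      refine ⟨Finset.filter_subset _ _, ?_, ?_⟩
      · show mcc_mf d (mccUS {A, B}) ∈ mccVS d {A, B}
        rw [mccVS, Finset.mem_filter]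
        exact ⟨hmU, fun C _ hmC => hmC⟩
      · rcases (mcc_mem_US A B hAB _).mp hmU with ⟨hmA, hmB⟩ | ⟨hmB, hmA⟩
        · obtain ⟨y, hyA⟩ := hAuniv
          have hyB : y ∈ B := (hcov y).resolve_left hyA
          have hyU : y ∈ mccUS {A, B} := (mcc_mem_US A B hAB y).mpr (Or.inr ⟨hyB, hyA⟩)
          intro heq
          have heq' : mccVS d {A, B} = mccUS {A, B} := heq
          have hyV : y ∈ mccVS d {A, B} := heq' ▸ hyU
          rw [mccVS, Finset.mem_filter] at hyV
          exact hyA (hyV.2 A (by simp) hmA)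
        · obtain ⟨y, hyB⟩ := hBuniv
          have hyA : y ∈ A := (hcov y).resolve_right hyB
          have hyU : y ∈ mccUS {A, B} := (mcc_mem_US A B hAB y).mpr (Or.inl ⟨hyA, hyB⟩)
          intro heq
          have heq' : mccVS d {A, B} = mccUS {A, B} := heq
          have hyV : y ∈ mccVS d {A, B} := heq' ▸ hyU
          rw [mccVS, Finset.mem_filter] at hyV
          exact hyB (hyV.2 B (by simp) hmB)
  · -- backward: f maps T into family
    rintro ⟨U, V⟩ hp
    rw [hT, Finset.mem_coe, Finset.mem_sigma, Finset.mem_powersetCard, Finset.mem_filter,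
      Finset.mem_powerset] at hp
    obtain ⟨⟨-, hUk⟩, hVU, hmV, hVne⟩ := hp
    set m := mcc_mf d U with hm
    simp only
    have hmA : m ∈ V ∪ Uᶜ := Finset.mem_union_left _ hmV
    have hmB : m ∉ (U \ V) ∪ Uᶜ := by
      simp [Finset.mem_union, Finset.mem_sdiff, Finset.mem_compl, hmV, hVU hmV]
    have hAB : V ∪ Uᶜ ≠ (U \ V) ∪ Uᶜ := fun h => hmB (h ▸ hmA)
    obtain ⟨y, hyU, hyV⟩ := Finset.exists_of_ssubset (Finset.ssubset_iff_subset_ne.mpr ⟨hVU, hVne⟩)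
    have hyA : y ∉ V ∪ Uᶜ := by
      simp [Finset.mem_union, Finset.mem_compl, hyV, hyU]
    have hyB : y ∈ (U \ V) ∪ Uᶜ := Finset.mem_union_left _ (Finset.mem_sdiff.mpr ⟨hyU, hyV⟩)
    have hUS : mccUS {V ∪ Uᶜ, (U \ V) ∪ Uᶜ} = U := mcc_US_f U V hVU ⟨m, hmV⟩
    simp only [Finset.mem_coe, Finset.mem_filter, Finset.mem_univ, true_and]
    refine ⟨Finset.card_pair hAB, ?_, ?_, ?_⟩
    · intro x
      by_cases hxU : x ∈ U
      · by_cases hxV : x ∈ V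
        · exact ⟨V ∪ Uᶜ, by simp, Finset.mem_union_left _ hxV⟩
        · exact ⟨(U \ V) ∪ Uᶜ, by simp, Finset.mem_union_left _ (Finset.mem_sdiff.mpr ⟨hxU, hxV⟩)⟩
      · exact ⟨V ∪ Uᶜ, by simp, Finset.mem_union_right _ (Finset.mem_compl.mpr hxU)⟩
    · intro T' hT' hcovT'
      have hone : (V ∪ Uᶜ) ∉ T' ∨ ((U \ V) ∪ Uᶜ) ∉ T' := by
        by_contra h
        push_neg at h
        exact hT'.ne (Finset.Subset.antisymm hT'.subset
          (Finset.insert_subset h.1 (Finset.singleton_subset_iff.mpr h.2)))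
      rcases hone with hA' | hB'
      · obtain ⟨C, hCT, hmC⟩ := hcovT' m
        have hC2 : C ∈ ({V ∪ Uᶜ, (U \ V) ∪ Uᶜ} : Finset (Finset (Fin s))) := hT'.subset hCT
        simp only [Finset.mem_insert, Finset.mem_singleton] at hC2
        rcases hC2 with rfl | rfl
        · exact hA' hCT
        · exact hmB hmC
      · obtain ⟨C, hCT, hyC⟩ := hcovT' y
        have hC2 : C ∈ ({V ∪ Uᶜ, (U \ V) ∪ Uᶜ} : Finset (Finset (Fin s))) := hT'.subset hCT
        simp only [Finset.mem_insert, Finset.mem_singleton] at hC2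
        rcases hC2 with rfl | rfl
        · exact hyA hyC
        · exact hB' hCT
    · have : Finset.univ.filter
          (fun x : Fin s => ((({V ∪ Uᶜ, (U \ V) ∪ Uᶜ} : Finset (Finset (Fin s))).filter
            (fun A => x ∈ A)).card = 1)) = mccUS {V ∪ Uᶜ, (U \ V) ∪ Uᶜ} := rfl
      rw [this, hUS, hUk]
  · -- left inverse
    intro S hS
    simp only [Finset.mem_coe, Finset.mem_filter, Finset.mem_univ, true_and] at hS
    obtain ⟨h1, h2, h3, h4⟩ := hS
    have hUk : (mccUS S).card = k := by simpa [mccUS] using h4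
    have hUne : (mccUS S).Nonempty := Finset.card_pos.mp (by omega)
    have hmU : mcc_mf d (mccUS S) ∈ mccUS S := mcc_mf_mem d _ hUne
    obtain ⟨A, B, hAB, rfl⟩ := Finset.card_eq_two.mp h1
    have hcov : ∀ x : Fin s, x ∈ A ∨ x ∈ B := by
      intro x
      obtain ⟨C, hC, hxC⟩ := h2 x
      simp only [Finset.mem_insert, Finset.mem_singleton] at hC
      rcases hC with rfl | rfl
      · exact Or.inl hxC
      · exact Or.inr hxC
    simp only
    rcases (mcc_mem_US A B hAB _).mp hmU with ⟨hmA, hmB⟩ | ⟨hmB, hmA⟩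
    · obtain ⟨e1, e2⟩ := mcc_left d A B hAB hcov hmA hmB
      rw [e1, e2]
    · rw [Finset.pair_comm A B] at hmA hmB ⊢
      obtain ⟨e1, e2⟩ := mcc_left d B A hAB.symm (fun x => (hcov x).symm) hmB hmA
      rw [e1, e2]
  · -- right inverse
    rintro ⟨U, V⟩ hp
    rw [hT, Finset.mem_coe, Finset.mem_sigma, Finset.mem_powersetCard, Finset.mem_filter,
      Finset.mem_powerset] at hp
    obtain ⟨⟨-, hUk⟩, hVU, hmV, hVne⟩ := hp
    set m := mcc_mf d U with hm
    simp only
    have hUS : mccUS {V ∪ Uᶜ, (U \ V) ∪ Uᶜ} = U := mcc_US_f U V hVU ⟨m, hmV⟩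
    have hmA : m ∈ V ∪ Uᶜ := Finset.mem_union_left _ hmV
    have hmB : m ∉ (U \ V) ∪ Uᶜ := by
      simp [Finset.mem_union, Finset.mem_sdiff, Finset.mem_compl, hmV, hVU hmV]
    have hVSeq : mccVS d {V ∪ Uᶜ, (U \ V) ∪ Uᶜ} = V := by
      rw [mccVS, hUS]
      have hcond : ∀ x ∈ U, ((∀ C ∈ ({V ∪ Uᶜ, (U \ V) ∪ Uᶜ} : Finset (Finset (Fin s))),
          mcc_mf d U ∈ C → x ∈ C) ↔ x ∈ V) := by
        intro x hxU
        constructor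
        · intro h
          have := h (V ∪ Uᶜ) (by simp) hmA
          rcases Finset.mem_union.mp this with h' | h'
          · exact h'
          · exact absurd hxU (Finset.mem_compl.mp h')
        · intro hxV C hC hmC
          simp only [Finset.mem_insert, Finset.mem_singleton] at hC
          rcases hC with rfl | rfl
          · exact Finset.mem_union_left _ hxV
          · exact absurd hmC hmB
      rw [Finset.filter_congr hcond]
      exact Finset.filter_mem_eq_inter.trans (by rw [Finset.inter_eq_right.mpr hVU])
    exact Sigma.ext hUS (heq_of_eq hVSeq)
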